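/- For s ∈ ℝ, the upper incomplete Gamma function Γ(s, y) = ∫_y^∞ z^{s−1} e^{−z} dz satisfies lim_{y→∞} Γ(s, y)/(y^{s−1} e^{−y}) = 1. -/

import Mathlib

open MeasureTheory Set Filter Real

private lemma f_integrableOn (s : ℝ) :
    IntegrableOn (fun z : ℝ => z ^ (s - 1) * Real.exp (-z)) (Ioi 1) := by
  refine integrable_of_isBigO_exp_neg (b := 1/2) one_half_pos ?_ ?_
  · refine ContinuousOn.mul (ContinuousOn.rpow_const continuousOn_id ?_) ?_
    · intro x hx; exact Or.inl (by simpa using (lt_of_lt_of_le one_pos hx).ne')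
    · exact continuousOn_id.neg.rexp
  · have := (Real.Gamma_integrand_isLittleO (s - 1)).isBigO
    simpa [mul_comm] using this

/-- Asymptotics of the upper incomplete Gamma function:
`Γ(s, y) = ∫_y^∞ z^{s−1} e^{−z} dz` satisfies `Γ(s, y) / (y^{s−1} e^{−y}) → 1`
as `y → ∞`, for every `s ∈ ℝ`. -/
theorem incomplete_gamma_asymptotics (s : ℝ) :
    Filter.Tendsto
      (fun y : ℝ =>
        (∫ z in Set.Ioi y, z ^ (s - 1) * Real.exp (-z)) / (y ^ (s - 1) * Real.exp (-y)))
      Filter.atTop (nhds 1) := by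
  set f : ℝ → ℝ := fun z => z ^ (s - 1) * Real.exp (-z) with hf
  set F : ℝ → ℝ := fun y => ∫ z in Ioi y, f z with hF
  have hint := f_integrableOn s
  have hcont : ∀ y : ℝ, 0 < y → ContinuousAt f y := by
    intro y hy
    exact ((Real.continuousAt_rpow_const _ _ (Or.inl hy.ne')).comp continuousAt_id).mul
      (continuous_exp.continuousAt.comp continuousAt_id.neg)
  -- F y = F 1 - ∫ in 1..y for 1 ≤ y
  have hsplit : ∀ y : ℝ, 1 ≤ y → F y = F 1 - ∫ t in (1:ℝ)..y, f t := by
    intro y hy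
    have h1 : (∫ z in Ioi (1:ℝ), f z) = (∫ t in Ioc 1 y, f t) + ∫ z in Ioi y, f z := by
      rw [← Ioc_union_Ioi_eq_Ioi hy,
        setIntegral_union (Ioc_disjoint_Ioi le_rfl) measurableSet_Ioi
        (hint.mono_set (Ioc_subset_Ioi_self)) (hint.mono_set (Ioi_subset_Ioi hy))]
    show (∫ z in Ioi y, f z) = (∫ z in Ioi (1:ℝ), f z) - ∫ t in (1:ℝ)..y, f t
    rw [intervalIntegral.integral_of_le hy, h1]; ring
  -- derivative of F
  have hFderiv : ∀ y : ℝ, 1 < y → HasDerivAt F (-(f y)) y := by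
    intro y hy
    have hii : IntervalIntegrable f volume 1 y := by
      rw [intervalIntegrable_iff_integrableOn_Ioc_of_le hy.le]
      exact hint.mono_set Ioc_subset_Ioi_self
    have hd : HasDerivAt (fun u => F 1 - ∫ t in (1:ℝ)..u, f t) (-(f y)) y := by
      have := intervalIntegral.integral_hasDerivAt_right hii
        ⟨Ioi 1, Ioi_mem_nhds hy, hint.aestronglyMeasurable⟩ (hcont y (lt_trans one_pos hy))
      simpa using (this.const_sub (F 1))
    refine hd.congr_of_eventuallyEq ?_
    filter_upwards [Ioi_mem_nhds hy] with u hu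
    exact hsplit u (le_of_lt hu)
  -- derivative of G
  set G : ℝ → ℝ := fun y => y ^ (s - 1) * Real.exp (-y) with hG
  set G' : ℝ → ℝ := fun y => f y * ((s - 1) / y - 1) with hG'
  have hGderiv : ∀ y : ℝ, 1 < y → HasDerivAt G (G' y) y := by
    intro y hy
    have hy0 : (0:ℝ) < y := lt_trans one_pos hy
    have h1 : HasDerivAt (fun x : ℝ => x ^ (s - 1)) ((s - 1) * y ^ (s - 1 - 1)) y :=
      Real.hasDerivAt_rpow_const (Or.inl hy0.ne')
    have h2 : HasDerivAt (fun x : ℝ => Real.exp (-x)) (-Real.exp (-y)) y := by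
      simpa using ((hasDerivAt_id y).neg.exp)
    have : HasDerivAt (fun x : ℝ => x ^ (s - 1) * Real.exp (-x))
        ((s - 1) * y ^ (s - 1 - 1) * Real.exp (-y) + y ^ (s - 1) * -Real.exp (-y)) y := h1.mul h2
    convert this using 1
    rw [hG', hf]
    have : y ^ (s - 1 - 1) = y ^ (s - 1) / y := Real.rpow_sub_one hy0.ne' _
    rw [this, hG]
    field_simp [this]
    ring
  -- apply L'Hopital
  have hFtop : Tendsto F atTop (nhds 0) := by
    have h1 : Tendsto (fun y => ∫ t in (1:ℝ)..y, f t) atTop (nhds (F 1)) :=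
      intervalIntegral_tendsto_integral_Ioi 1 hint tendsto_id
    have h2 : Tendsto (fun y => F 1 - ∫ t in (1:ℝ)..y, f t) atTop (nhds (F 1 - F 1)) :=
      tendsto_const_nhds.sub h1
    rw [sub_self] at h2
    refine h2.congr' ?_
    filter_upwards [eventually_ge_atTop (1:ℝ)] with y hy
    exact (hsplit y hy).symm
  have hGtop : Tendsto G atTop (nhds 0) := by
    have := tendsto_rpow_mul_exp_neg_mul_atTop_nhds_zero (s - 1) 1 one_pos
    refine this.congr fun y => by rw [hG]; norm_num
  have hG'ne : ∀ᶠ y in atTop, G' y ≠ 0 := by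
    filter_upwards [eventually_gt_atTop (max 1 (|s - 1| + 1))] with y hy
    have hy1 : (1:ℝ) < y := lt_of_le_of_lt (le_max_left _ _) hy
    have hy0 : (0:ℝ) < y := lt_trans one_pos hy1
    have hfy : f y ≠ 0 :=
      mul_ne_zero (Real.rpow_pos_of_pos hy0 _).ne' (Real.exp_pos _).ne'
    refine mul_ne_zero hfy ?_
    have h1 : |s - 1| / y < 1 := by
      rw [div_lt_one hy0]
      calc |s - 1| < |s - 1| + 1 := by linarith
        _ ≤ max 1 (|s-1|+1) := le_max_right _ _
        _ < y := hy
    have : |(s - 1) / y| < 1 := by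
      rwa [abs_div, abs_of_pos hy0]
    intro hcontra
    have h2 : (s - 1) / y = 1 := by linarith
    have h3 : s - 1 = y := by
      field_simp at h2; linarith
    have h4 : |s - 1| < y := (div_lt_one hy0).mp h1
    linarith [le_abs_self (s - 1)]
  have hdiv : Tendsto (fun y => (-(f y)) / G' y) atTop (nhds 1) := by
    have key : ∀ᶠ y in atTop, (-(f y)) / G' y = (1 - (s - 1) / y)⁻¹ := by
      filter_upwards [eventually_gt_atTop (max 1 (|s - 1| + 1))] with y hy
      have hy1 : (1:ℝ) < y := lt_of_le_of_lt (le_max_left _ _) hy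
      have hy0 : (0:ℝ) < y := lt_trans one_pos hy1
      have hfy : f y ≠ 0 :=
        mul_ne_zero (Real.rpow_pos_of_pos hy0 _).ne' (Real.exp_pos _).ne'
      have habs : |s - 1| < y := lt_of_lt_of_le (by linarith [le_max_right 1 (|s-1|+1)]) hy.le
      have hlt : (s - 1) / y < 1 := (div_lt_one hy0).mpr (lt_of_le_of_lt (le_abs_self _) habs)
      have hne' : (s - 1) / y - 1 ≠ 0 := by intro h; linarith
      have h1c : 1 - (s - 1) / y ≠ 0 := by intro h; linarith
      show -(f y) / (f y * ((s - 1) / y - 1)) = (1 - (s - 1) / y)⁻¹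
      rw [div_eq_iff (mul_ne_zero hfy hne'), inv_mul_eq_div, eq_div_iff h1c]
      ring
    rw [tendsto_congr' key]
    have h1 : Tendsto (fun y : ℝ => 1 - (s - 1) / y) atTop (nhds 1) := by
      have h0 : Tendsto (fun y : ℝ => (s - 1) / y) atTop (nhds 0) :=
        Tendsto.div_atTop tendsto_const_nhds tendsto_id
      simpa using (tendsto_const_nhds (x := (1:ℝ)) (f := atTop)).sub h0
    have := h1.inv₀ (by norm_num)
    simpa using this
  have hff' : ∀ᶠ y in atTop, HasDerivAt F (-(f y)) y := by
    filter_upwards [eventually_gt_atTop (1:ℝ)] with y hy using hFderiv y hy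
  have hgg' : ∀ᶠ y in atTop, HasDerivAt G (G' y) y := by
    filter_upwards [eventually_gt_atTop (1:ℝ)] with y hy using hGderiv y hy
  exact HasDerivAt.lhopital_zero_atTop hff' hgg' hG'ne hFtop hGtop hdiv
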